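/- Let E be a standard Borel space, let κ be a Markov kernel from E to E, let x₀ ∈ E, and let ℙ denote the law on E^ℕ of the time-homogeneous Markov chain (X_n)_{n≥0} with X_0 = x₀ and one-step transition kernel κ (the Ionescu–Tulcea trajectory measure), where X_n is the n-th coordinate map. Let E₀, F ⊆ E be measurable sets, let m ≥ 1 be a natural number and λ > 0 a real number, and assume the m-step kernel κ^m satisfies κ^m(x, F) ≥ λ for every x ∈ E₀. Then ℙ-almost surely, if X_n ∈ E₀ for infinitely many n, then X_n ∈ F for infinitely many n; that is, ℙ({X_n ∈ E₀ for infinitely many n} \ {X_n ∈ F for infinitely many n}) = 0. -/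

import Mathlib

open MeasureTheory ProbabilityTheory Set

/-- The `k`-step kernel: the `k`-fold composition of `κ` with itself. -/
noncomputable def kernelPow {E : Type*} [MeasurableSpace E] (κ : Kernel E E) :
    ℕ → Kernel E E
  | 0 => Kernel.id
  | n + 1 => κ ∘ₖ kernelPow κ n

/-- The σ-algebra on trajectories generated by the coordinates `0, …, n`. -/
def trajFiltration (E : Type*) [MeasurableSpace E] (n : ℕ) : MeasurableSpace (ℕ → E) :=
  MeasurableSpace.comap (fun ω (i : Fin (n + 1)) => ω i) inferInstance

section Aux

variable {E : Type*}

instance kernelPow.instIsMarkovKernel [MeasurableSpace E] (κ : Kernel E E) [IsMarkovKernel κ]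
    (m : ℕ) : IsMarkovKernel (kernelPow κ m) := by
  induction m with
  | zero => exact inferInstanceAs (IsMarkovKernel (Kernel.id : Kernel E E))
  | succ n ih => exact inferInstanceAs (IsMarkovKernel (κ ∘ₖ kernelPow κ n))

lemma measurable_eval_le [MeasurableSpace E] {j t : ℕ} (h : j ≤ t) :
    Measurable[trajFiltration E t] (fun ω : ℕ → E => ω j) := by
  have h1 : Measurable[trajFiltration E t]
      (fun ω : ℕ → E => (fun i : Fin (t + 1) => ω i)) := fun s hs => ⟨s, hs, rfl⟩
  exact (measurable_pi_apply (⟨j, Nat.lt_succ_of_le h⟩ : Fin (t + 1))).comp h1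

lemma trajFiltration_le [MeasurableSpace E] (t : ℕ) :
    trajFiltration E t ≤ (inferInstance : MeasurableSpace (ℕ → E)) := by
  rintro S ⟨s, hs, rfl⟩
  exact (measurable_pi_lambda _ fun i : Fin (t + 1) => measurable_pi_apply (i : ℕ)) hs

lemma trajFiltration_mono [MeasurableSpace E] {s t : ℕ} (h : s ≤ t) :
    trajFiltration E s ≤ trajFiltration E t := by
  rintro S ⟨u, hu, rfl⟩
  refine ⟨(fun v : Fin (t + 1) → E => fun i : Fin (s + 1) =>
    v ⟨i, lt_of_lt_of_le i.2 (by omega)⟩) ⁻¹' u,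
    (measurable_pi_lambda _ fun i => measurable_pi_apply _) hu, rfl⟩

/-- The `m`-step Markov property, derived by iterating the one-step Markov property. -/
lemma multistep [MeasurableSpace E] (κ : Kernel E E) [IsMarkovKernel κ]
    (P : Measure (ℕ → E)) [IsProbabilityMeasure P]
    (hMarkov : ∀ (n : ℕ) (S : Set (ℕ → E)), MeasurableSet[trajFiltration E n] S →
      ∀ (A : Set E), MeasurableSet A →
        P (S ∩ {ω | ω (n + 1) ∈ A}) = ∫⁻ ω in S, κ (ω n) A ∂P)
    (m : ℕ) : ∀ (n : ℕ) (S : Set (ℕ → E)), MeasurableSet[trajFiltration E n] S →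
      ∀ (A : Set E), MeasurableSet A →
        P (S ∩ {ω | ω (n + m) ∈ A}) = ∫⁻ ω in S, kernelPow κ m (ω n) A ∂P := by
  induction m with
  | zero =>
    intro n S hS A hA
    have hT : MeasurableSet {ω : ℕ → E | ω n ∈ A} := measurable_pi_apply n hA
    have : ∀ ω : ℕ → E, kernelPow κ 0 (ω n) A
        = Set.indicator {ω' : ℕ → E | ω' n ∈ A} 1 ω := by
      intro ω
      rw [show kernelPow κ 0 = Kernel.id from rfl, Kernel.id_apply,
        Measure.dirac_apply' _ hA]
      rfl
    simp only [this]
    rw [lintegral_indicator_one hT, Measure.restrict_apply hT, Set.inter_comm,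
      Nat.add_zero]
  | succ m ih =>
    intro n S hS A hA
    have hS' : MeasurableSet S := trajFiltration_le n S hS
    have hevalnm : Measurable (fun ω : ℕ → E => ω (n + m)) := measurable_pi_apply _
    have hker : Measurable (fun ω : ℕ → E => kernelPow κ m (ω n)) :=
      (kernelPow κ m).measurable.comp (measurable_pi_apply n)
    have hmap : Measure.map (fun ω : ℕ → E => ω (n + m)) (P.restrict S)
        = (P.restrict S).bind (fun ω => kernelPow κ m (ω n)) := by
      ext B hB
      rw [Measure.map_apply hevalnm hB, Measure.bind_apply hB hker.aemeasurable,
        Measure.restrict_apply (hevalnm hB), Set.inter_comm]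
      exact ih n S hS B hB
    calc P (S ∩ {ω | ω (n + (m + 1)) ∈ A})
        = P (S ∩ {ω | ω ((n + m) + 1) ∈ A}) := by rw [show n + (m+1) = (n+m)+1 by omega]
      _ = ∫⁻ ω in S, κ (ω (n + m)) A ∂P :=
          hMarkov (n + m) S (trajFiltration_mono (Nat.le_add_right n m) S hS) A hA
      _ = ∫⁻ y, κ y A ∂(Measure.map (fun ω : ℕ → E => ω (n + m)) (P.restrict S)) :=
          (lintegral_map (κ.measurable_coe hA) hevalnm).symm
      _ = ∫⁻ ω, ∫⁻ y, κ y A ∂(kernelPow κ m (ω n)) ∂(P.restrict S) := by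
          rw [hmap, Measure.lintegral_bind hker.aemeasurable (κ.measurable_coe hA).aemeasurable]
      _ = ∫⁻ ω in S, kernelPow κ (m + 1) (ω n) A ∂P := by
          refine lintegral_congr fun ω => ?_
          rw [show kernelPow κ (m + 1) = κ ∘ₖ kernelPow κ m from rfl,
            Kernel.comp_apply' _ _ _ hA]

/-- `BSet E₀ F m K r t` : the `r`-th `m`-separated visit to `E₀` after time `K`
happens at time `t`, and there is no visit to `F` in `(K, t]`. -/
def BSet (E₀ F : Set E) (m K : ℕ) : ℕ → ℕ → Set (ℕ → E)
  | 0, t => if t = K then Set.univ else ∅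
  | r + 1, t => ⋃ (s : ℕ) (_ : s + m ≤ t), (BSet E₀ F m K r s ∩ {ω | ω t ∈ E₀}
      ∩ {ω | ∀ j, s + m ≤ j → j < t → ω j ∉ E₀} ∩ {ω | ∀ j, s < j → j ≤ t → ω j ∉ F})

variable {E₀ F : Set E} {m K : ℕ}

lemma BSet_measurable [MeasurableSpace E] (hE₀ : MeasurableSet E₀) (hF : MeasurableSet F) :
    ∀ r t, MeasurableSet[trajFiltration E t] (BSet E₀ F m K r t) := by
  intro r
  induction r with
  | zero =>
    intro t
    by_cases h : t = K <;> simp [BSet, h]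
  | succ r ih =>
    intro t
    refine MeasurableSet.iUnion fun s => MeasurableSet.iUnion fun hs => ?_
    have hst : s ≤ t := le_trans (Nat.le_add_right s m) hs
    have h1 : MeasurableSet[trajFiltration E t] (BSet E₀ F m K r s) :=
      trajFiltration_mono hst _ (ih s)
    have h2 : MeasurableSet[trajFiltration E t] {ω : ℕ → E | ω t ∈ E₀} :=
      measurable_eval_le le_rfl hE₀
    have h3 : MeasurableSet[trajFiltration E t]
        {ω : ℕ → E | ∀ j, s + m ≤ j → j < t → ω j ∉ E₀} := by
      have : {ω : ℕ → E | ∀ j, s + m ≤ j → j < t → ω j ∉ E₀}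
          = ⋂ (j : ℕ) (_ : s + m ≤ j) (_ : j < t), (fun ω : ℕ → E => ω j) ⁻¹' E₀ᶜ := by
        ext ω; simp [Set.mem_iInter]
      rw [this]
      exact MeasurableSet.iInter fun j => MeasurableSet.iInter fun _ =>
        MeasurableSet.iInter fun hj => measurable_eval_le hj.le hE₀.compl
    have h4 : MeasurableSet[trajFiltration E t]
        {ω : ℕ → E | ∀ j, s < j → j ≤ t → ω j ∉ F} := by
      have : {ω : ℕ → E | ∀ j, s < j → j ≤ t → ω j ∉ F}
          = ⋂ (j : ℕ) (_ : s < j) (_ : j ≤ t), (fun ω : ℕ → E => ω j) ⁻¹' Fᶜ := by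
        ext ω; simp [Set.mem_iInter]
      rw [this]
      exact MeasurableSet.iInter fun j => MeasurableSet.iInter fun _ =>
        MeasurableSet.iInter fun hj => measurable_eval_le hj hF.compl
    exact ((h1.inter h2).inter h3).inter h4

lemma BSet_subset_E₀ {r t : ℕ} : BSet E₀ F m K (r + 1) t ⊆ {ω | ω t ∈ E₀} := by
  intro ω hω
  simp only [BSet, Set.mem_iUnion] at hω
  obtain ⟨s, hs, ⟨⟨⟨_, h2⟩, _⟩, _⟩⟩ := hω
  exact h2

lemma BSet_disjoint : ∀ r, ∀ t t' : ℕ, t ≠ t' →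
    ∀ ω, ω ∈ BSet E₀ F m K r t → ω ∈ BSet E₀ F m K r t' → False := by
  intro r
  induction r with
  | zero =>
    intro t t' htt' ω h1 h2
    simp only [BSet] at h1 h2
    by_cases h : t = K
    · by_cases h' : t' = K
      · exact htt' (h.trans h'.symm)
      · simp [h'] at h2
    · simp [h] at h1
  | succ r ih =>
    intro t t' htt' ω h1 h2
    simp only [BSet, Set.mem_iUnion] at h1 h2
    obtain ⟨s, hs, ⟨⟨⟨hB, hE⟩, hnoE⟩, _⟩⟩ := h1
    obtain ⟨s', hs', ⟨⟨⟨hB', hE'⟩, hnoE'⟩, _⟩⟩ := h2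
    have hss' : s = s' := by
      by_contra hne
      exact ih s s' hne ω hB hB'
    subst hss'
    rcases Nat.lt_or_ge t t' with h | h
    · exact hnoE' t hs h hE
    · exact hnoE t' hs' (lt_of_le_of_ne h (Ne.symm htt')) hE'

lemma BSet_reach (ω : ℕ → E) (hio : ∀ N : ℕ, ∃ n ≥ N, ω n ∈ E₀)
    (hnoF : ∀ j, K ≤ j → ω j ∉ F) :
    ∀ r, ∃ t, K ≤ t ∧ ω ∈ BSet E₀ F m K r t := by
  intro r
  induction r with
  | zero => exact ⟨K, le_rfl, by simp [BSet]⟩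
  | succ r ih =>
    obtain ⟨s, hKs, hmem⟩ := ih
    classical
    have hex : ∃ n, s + m ≤ n ∧ ω n ∈ E₀ := by
      obtain ⟨n, hn, hE⟩ := hio (s + m)
      exact ⟨n, hn, hE⟩
    set t := Nat.find hex with ht
    obtain ⟨hts, htE⟩ := Nat.find_spec hex
    refine ⟨t, le_trans hKs (le_trans (Nat.le_add_right s m) hts), ?_⟩
    simp only [BSet, Set.mem_iUnion]
    refine ⟨s, hts, ⟨⟨⟨hmem, htE⟩, ?_⟩, ?_⟩⟩
    · intro j hj1 hj2 hjE
      exact Nat.find_min hex hj2 ⟨hj1, hjE⟩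
    · intro j hj1 _
      exact hnoF j (le_trans hKs hj1.le)

end Aux

theorem stmt8
    {E : Type*} [MeasurableSpace E] [StandardBorelSpace E]
    (κ : Kernel E E) [IsMarkovKernel κ]
    (x₀ : E)
    (P : Measure (ℕ → E)) [IsProbabilityMeasure P]
    -- `P` is the trajectory law of the chain started at `x₀` with one-step kernel `κ`:
    -- the chain starts at `x₀` …
    (hinit : P {ω | ω 0 = x₀} = 1)
    -- … and satisfies the Markov property with transition kernel `κ`
    (hMarkov : ∀ (n : ℕ) (S : Set (ℕ → E)), MeasurableSet[trajFiltration E n] S →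
      ∀ (A : Set E), MeasurableSet A →
        P (S ∩ {ω | ω (n + 1) ∈ A}) = ∫⁻ ω in S, κ (ω n) A ∂P)
    (E₀ F : Set E) (hE₀ : MeasurableSet E₀) (hF : MeasurableSet F)
    (m : ℕ) (hm : 1 ≤ m) (lam : ℝ) (hlam : 0 < lam)
    -- the `m`-step kernel satisfies `κ^m(x, F) ≥ λ` for every `x ∈ E₀`
    (hstep : ∀ x ∈ E₀, ENNReal.ofReal lam ≤ kernelPow κ m x F) :
    -- almost surely, visiting `E₀` infinitely often implies visiting `F` infinitely often
    P ({ω | ∀ N : ℕ, ∃ n ≥ N, ω n ∈ E₀} \ {ω | ∀ N : ℕ, ∃ n ≥ N, ω n ∈ F}) = 0 := by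
  set c : ENNReal := 1 - ENNReal.ofReal lam with hc
  have hc1 : c < 1 :=
    ENNReal.sub_lt_self ENNReal.one_ne_top one_ne_zero
      (ENNReal.ofReal_pos.mpr hlam).ne'
  have hMulti := multistep κ P hMarkov m
  set Nt : ℕ → Set (ℕ → E) := fun t => {ω | ∀ j, t < j → j ≤ t + m → ω j ∉ F} with hNt
  -- For each K, the event "E₀ i.o. and no F-visit from time K on" is null.
  have hCK : ∀ K : ℕ,
      P ({ω | ∀ N : ℕ, ∃ n ≥ N, ω n ∈ E₀} ∩ {ω | ∀ j, K ≤ j → ω j ∉ F}) = 0 := by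
    intro K
    set B : ℕ → ℕ → Set (ℕ → E) := BSet E₀ F m K with hB
    have hmeasB : ∀ r t, MeasurableSet (B r t) := fun r t =>
      trajFiltration_le t _ (BSet_measurable hE₀ hF r t)
    set p : ℕ → ENNReal := fun r => ∑' t, P (B r t ∩ Nt t) with hp
    have hstepP : ∀ r, p (r + 1) ≤ c * p r := by
      intro r
      have h1 : ∀ t, P (B (r + 1) t ∩ Nt t) ≤ c * P (B (r + 1) t) := by
        intro t
        have hsub : B (r + 1) t ∩ Nt t ⊆ B (r + 1) t ∩ {ω | ω (t + m) ∈ Fᶜ} := by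
          rintro ω ⟨h1, h2⟩
          exact ⟨h1, h2 (t + m) (by omega) le_rfl⟩
        calc P (B (r + 1) t ∩ Nt t)
            ≤ P (B (r + 1) t ∩ {ω | ω (t + m) ∈ Fᶜ}) := measure_mono hsub
          _ = ∫⁻ ω in B (r + 1) t, kernelPow κ m (ω t) Fᶜ ∂P :=
              hMulti t _ (BSet_measurable hE₀ hF (r + 1) t) Fᶜ hF.compl
          _ ≤ ∫⁻ _ in B (r + 1) t, c ∂P := by
              refine setLIntegral_mono measurable_const fun ω hω => ?_
              have hx : ω t ∈ E₀ := BSet_subset_E₀ hω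
              rw [prob_compl_eq_one_sub hF]
              exact tsub_le_tsub_left (hstep _ hx) 1
          _ = c * P (B (r + 1) t) := setLIntegral_const _ _
      have hdisj : Pairwise (Function.onFun Disjoint fun t => B (r + 1) t) := by
        intro t t' htt'
        exact Set.disjoint_left.mpr fun ω h1 h2 => BSet_disjoint (r + 1) t t' htt' ω h1 h2
      have hsub2 : (⋃ t, B (r + 1) t) ⊆ ⋃ s, B r s ∩ Nt s := by
        rintro ω hω
        obtain ⟨t, hω⟩ := Set.mem_iUnion.mp hω
        simp only [hB, BSet, Set.mem_iUnion] at hω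
        obtain ⟨s, hs, ⟨⟨⟨hBs, _⟩, _⟩, h4⟩⟩ := hω
        exact Set.mem_iUnion.mpr ⟨s, hBs, fun j hj1 hj2 => h4 j hj1 (le_trans hj2 hs)⟩
      calc p (r + 1) ≤ ∑' t, c * P (B (r + 1) t) := ENNReal.tsum_le_tsum h1
        _ = c * ∑' t, P (B (r + 1) t) := ENNReal.tsum_mul_left
        _ = c * P (⋃ t, B (r + 1) t) := by rw [measure_iUnion hdisj fun t => hmeasB (r + 1) t]
        _ ≤ c * P (⋃ s, B r s ∩ Nt s) := mul_le_mul_right (measure_mono hsub2) c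
        _ ≤ c * ∑' s, P (B r s ∩ Nt s) := mul_le_mul_right (measure_iUnion_le _) c
        _ = c * p r := rfl
    have hp0 : p 0 ≤ 1 := by
      have heq : p 0 = P (B 0 K ∩ Nt K) := by
        refine tsum_eq_single K fun t ht => ?_
        have : B 0 t = ∅ := by simp [hB, BSet, ht]
        simp [this]
      rw [heq]
      exact prob_le_one
    have hpr : ∀ r, p r ≤ c ^ r := by
      intro r
      induction r with
      | zero => simpa using hp0
      | succ r ih =>
        calc p (r + 1) ≤ c * p r := hstepP r
          _ ≤ c * c ^ r := mul_le_mul_right ih c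
          _ = c ^ (r + 1) := by rw [pow_succ, mul_comm]
    have hle : ∀ r : ℕ,
        P ({ω | ∀ N : ℕ, ∃ n ≥ N, ω n ∈ E₀} ∩ {ω | ∀ j, K ≤ j → ω j ∉ F}) ≤ c ^ r := by
      intro r
      have hsubC : ({ω : ℕ → E | ∀ N : ℕ, ∃ n ≥ N, ω n ∈ E₀}
          ∩ {ω | ∀ j, K ≤ j → ω j ∉ F}) ⊆ ⋃ t, B r t ∩ Nt t := by
        rintro ω ⟨hio, hnoF⟩
        obtain ⟨t, hKt, hmem⟩ := BSet_reach ω hio hnoF r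
        exact Set.mem_iUnion.mpr ⟨t, hmem, fun j hj1 _ => hnoF j (le_trans hKt hj1.le)⟩
      calc P _ ≤ P (⋃ t, B r t ∩ Nt t) := measure_mono hsubC
        _ ≤ ∑' t, P (B r t ∩ Nt t) := measure_iUnion_le _
        _ ≤ c ^ r := hpr r
    refine le_antisymm ?_ zero_le
    exact ge_of_tendsto' (ENNReal.tendsto_pow_atTop_nhds_zero_of_lt_one hc1) hle
  have hsub : ({ω : ℕ → E | ∀ N : ℕ, ∃ n ≥ N, ω n ∈ E₀}
      \ {ω | ∀ N : ℕ, ∃ n ≥ N, ω n ∈ F})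
      ⊆ ⋃ K : ℕ, ({ω | ∀ N : ℕ, ∃ n ≥ N, ω n ∈ E₀} ∩ {ω | ∀ j, K ≤ j → ω j ∉ F}) := by
    rintro ω ⟨hio, hnF⟩
    simp only [Set.mem_setOf_eq, not_forall] at hnF
    obtain ⟨K, hK⟩ := hnF
    push_neg at hK
    exact Set.mem_iUnion.mpr ⟨K, hio, fun j hj => hK j hj⟩
  refine le_antisymm ?_ zero_le
  calc P _ ≤ P (⋃ K : ℕ, _) := measure_mono hsub
    _ ≤ ∑' K : ℕ, P ({ω | ∀ N : ℕ, ∃ n ≥ N, ω n ∈ E₀}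
        ∩ {ω | ∀ j, K ≤ j → ω j ∉ F}) := measure_iUnion_le _
    _ = 0 := by simp [hCK]
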